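/- Assume N ≥ 4 and the positivity condition θ_k ∈ (0,π) for all 1 ≤ k ≤ N with ∑_{k=1}^N θ_k = 2π. Then the signed-area quadratic form Q on ℝ^{N−2} has signature (1, N−3): there is a basis of ℝ^{N−2} in which Q(x) = x_1² − x_2² − … − x_{N−2}². Equivalently, the symmetric matrix A is invertible with exactly one positive and N−3 negative eigenvalues. -/

import Mathlib

/-- The cumulative angle `φ_k = ∑_{a=1}^k θ_a`. -/
noncomputable def phiAng (θ : ℕ → ℝ) (k : ℕ) : ℝ := ∑ a ∈ Finset.Icc 1 k, θ a

/-- The signed-area quadratic form `Q` on `ℝ^{N-2}` (coordinates indexed `1,…,N-2`). -/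
noncomputable def Qform (N : ℕ) (θ : ℕ → ℝ) (lam : ℕ → ℝ) : ℝ :=
  -(1/2) * ∑ j ∈ Finset.Icc 1 (N-2),
      Real.sin (phiAng θ N - phiAng θ j) * Real.sin (phiAng θ (N-1) - phiAng θ j)
        / Real.sin (θ N) * (lam j)^2
  - ∑ j ∈ Finset.Icc 1 (N-2), ∑ k ∈ Finset.Icc (j+1) (N-2),
      Real.sin (phiAng θ N - phiAng θ j) * Real.sin (phiAng θ (N-1) - phiAng θ k)
        / Real.sin (θ N) * (lam j * lam k)

/-- The vector `v`, `v_j = -sin(φ_N - φ_j)/sin(θ_N)`. -/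
noncomputable def vvec (N : ℕ) (θ : ℕ → ℝ) (j : ℕ) : ℝ :=
  -(Real.sin (phiAng θ N - phiAng θ j)) / Real.sin (θ N)

/-- The vector `w`, `w_j = sin(φ_{N-1} - φ_j)/sin(θ_N)`. -/
noncomputable def wvec (N : ℕ) (θ : ℕ → ℝ) (j : ℕ) : ℝ :=
  Real.sin (phiAng θ (N-1) - phiAng θ j) / Real.sin (θ N)

/-- The extended side lengths: `λ_k` for `k ≤ N-2`, `λ_{N-1} = vᵀλ`, `λ_N = wᵀλ`. -/
noncomputable def lamExt (N : ℕ) (θ : ℕ → ℝ) (lam : ℕ → ℝ) (k : ℕ) : ℝ :=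
  if k = N - 1 then ∑ j ∈ Finset.Icc 1 (N-2), vvec N θ j * lam j
  else if k = N then ∑ j ∈ Finset.Icc 1 (N-2), wvec N θ j * lam j
  else lam k

set_option linter.unusedSectionVars false
set_option maxHeartbeats 1000000

open Finset in
lemma icc_split_bot {M : Type*} [AddCommMonoid M] {t n : ℕ} (h : t ≤ n) (f : ℕ → M) :
    ∑ k ∈ Icc t n, f k = f t + ∑ k ∈ Icc (t+1) n, f k := by
  have h1 : Icc t n = insert t (Icc (t+1) n) := by
    rw [Finset.Icc_add_one_left_eq_Ioc, Finset.Ioc_insert_left h]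
  rw [h1, Finset.sum_insert (by simp)]

open Finset in
lemma master (n : ℕ) (a b u lam : ℕ → ℝ)
    (h : ∀ m, 1 ≤ m → m ≤ n → b m ≠ 0 → u m * b m = a m) :
    ∀ t, 1 ≤ t →
      (∑ m ∈ Icc t n, (u m - u (m-1)) * (∑ j ∈ Icc m n, b j * lam j)^2)
      + (∑ m ∈ Icc t n, if b m = 0 then 2 * a m * lam m * (∑ j ∈ Icc (m+1) n, b j * lam j) else 0)
      = (∑ j ∈ Icc t n, a j * b j * (lam j)^2)
        + 2 * (∑ j ∈ Icc t n, ∑ k ∈ Icc (j+1) n, a j * b k * (lam j * lam k))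
        - u (t-1) * (∑ j ∈ Icc t n, b j * lam j)^2 := by
  suffices H : ∀ d t, 1 ≤ t → n + 1 - t ≤ d →
      (∑ m ∈ Icc t n, (u m - u (m-1)) * (∑ j ∈ Icc m n, b j * lam j)^2)
      + (∑ m ∈ Icc t n, if b m = 0 then 2 * a m * lam m * (∑ j ∈ Icc (m+1) n, b j * lam j) else 0)
      = (∑ j ∈ Icc t n, a j * b j * (lam j)^2)
        + 2 * (∑ j ∈ Icc t n, ∑ k ∈ Icc (j+1) n, a j * b k * (lam j * lam k))
        - u (t-1) * (∑ j ∈ Icc t n, b j * lam j)^2 by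
    exact fun t ht => H (n + 1 - t) t ht le_rfl
  intro d
  induction d with
  | zero =>
    intro t ht hd
    have : Icc t n = ∅ := Finset.Icc_eq_empty (by omega)
    simp [this]
  | succ d ih =>
    intro t ht hd
    rcases le_or_gt t n with htn | htn
    · have hsplit : ∀ f : ℕ → ℝ, ∑ k ∈ Icc t n, f k = f t + ∑ k ∈ Icc (t+1) n, f k :=
        fun f => icc_split_bot htn f
      have IH := ih (t+1) (by omega) (by omega)
      simp only [Nat.add_sub_cancel] at IH
      rw [hsplit, hsplit (fun m => if b m = 0 then 2 * a m * lam m * (∑ j ∈ Icc (m+1) n, b j * lam j) else 0),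
        hsplit (fun j => a j * b j * (lam j)^2),
        hsplit (fun j => ∑ k ∈ Icc (j+1) n, a j * b k * (lam j * lam k)),
        hsplit (fun j => b j * lam j)]
      have hfac : ∑ k ∈ Icc (t+1) n, a t * b k * (lam t * lam k)
          = (a t * lam t) * ∑ k ∈ Icc (t+1) n, b k * lam k := by
        rw [Finset.mul_sum]; exact Finset.sum_congr rfl (fun k _ => by ring)
      set R := ∑ j ∈ Icc (t+1) n, b j * lam j with hR
      rcases eq_or_ne (b t) 0 with hb | hb
      · rw [if_pos hb, hfac]
        linear_combination IH + (u t * b t * (lam t)^2 + 2 * u t * lam t * R - a t * (lam t)^2) * hb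
      · rw [if_neg hb, hfac]
        have ha := h t ht htn hb
        linear_combination IH + (b t * (lam t)^2 + 2 * lam t * R) * ha
    · have : Icc t n = ∅ := Finset.Icc_eq_empty (by omega)
      simp [this]

open Real in
lemma sin_neg_of_pi_lt {x : ℝ} (h1 : Real.pi < x) (h2 : x < 2 * Real.pi) : Real.sin x < 0 := by
  have h : Real.sin (x - Real.pi) > 0 :=
    Real.sin_pos_of_pos_of_lt_pi (by linarith) (by linarith)
  rw [Real.sin_sub_pi] at h; linarith

open Real in
lemma eq_pi_of_sin_eq_zero {x : ℝ} (h1 : 0 < x) (h2 : x < 2 * Real.pi) (h : Real.sin x = 0) :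
    x = Real.pi := by
  have h3 : Real.sin (x - Real.pi) = 0 := by rw [Real.sin_sub_pi]; linarith
  have h4 := (Real.sin_eq_zero_iff_of_lt_of_lt (x := x - Real.pi)
    (by linarith [Real.pi_pos]) (by linarith [Real.pi_pos])).1 h3
  linarith

open Real in
lemma sin_two_pi_sub (x : ℝ) : Real.sin (2 * Real.pi - x) = -Real.sin x := by
  rw [Real.sin_sub]; simp [Real.sin_two_pi, Real.cos_two_pi]
set_option linter.unusedSectionVars false


namespace Stmt3Aux
open Finset Real

variable (N : ℕ) (θ : ℕ → ℝ)

/-- The angle `S_m = φ_{N-1} - φ_m`. -/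
noncomputable def Sv (m : ℕ) : ℝ := phiAng θ (N-1) - phiAng θ m

noncomputable def sS (m : ℕ) : ℝ := Real.sin (Sv N θ m)
noncomputable def sP (m : ℕ) : ℝ := Real.sin (phiAng θ m)

lemma phi_zero : phiAng θ 0 = 0 := by simp [phiAng]

lemma phi_diff {j k : ℕ} (hjk : j ≤ k) :
    phiAng θ k - phiAng θ j = ∑ a ∈ Icc (j+1) k, θ a := by
  have h0 : ∀ m : ℕ, phiAng θ m = ∑ a ∈ Ioc 0 m, θ a := by
    intro m; unfold phiAng; congr 1
  rw [h0, h0, show Icc (j+1) k = Ioc j k from Finset.Icc_add_one_left_eq_Ioc j k,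
    ← Finset.sum_Ioc_consecutive θ (Nat.zero_le j) hjk]
  ring

section WithHyp
variable (hN : 4 ≤ N) (hθ : ∀ k, 1 ≤ k → k ≤ N → θ k ∈ Set.Ioo 0 Real.pi)
  (hsum : ∑ k ∈ Finset.Icc 1 N, θ k = 2 * Real.pi)

include hN hθ hsum

lemma Sv_eq {m : ℕ} (hm : m ≤ N-1) : Sv N θ m = ∑ a ∈ Icc (m+1) (N-1), θ a :=
  phi_diff θ hm

lemma Sv_pos {m : ℕ} (hm : m ≤ N-2) : 0 < Sv N θ m := by
  rw [Sv_eq N θ hN hθ hsum (by omega)]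
  apply Finset.sum_pos
  · intro a ha; simp only [mem_Icc] at ha; exact (hθ a (by omega) (by omega)).1
  · exact ⟨N-1, by simp [mem_Icc]; omega⟩

lemma phi_N : phiAng θ N = 2 * Real.pi := hsum

lemma phi_pred : phiAng θ (N-1) = 2 * Real.pi - θ N := by
  have h := phi_diff θ (j := N-1) (k := N) (by omega)
  have h2 : Icc (N-1+1) N = {N} := by
    have : N - 1 + 1 = N := by omega
    rw [this, Finset.Icc_self]
  rw [h2, Finset.sum_singleton, phi_N N θ hN hθ hsum] at h
  linarith

lemma Sv_anti {j k : ℕ} (hjk : j < k) (hk : k ≤ N-1) : Sv N θ k < Sv N θ j := by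
  have h : phiAng θ k - phiAng θ j = ∑ a ∈ Icc (j+1) k, θ a := phi_diff θ (le_of_lt hjk)
  have hpos : 0 < ∑ a ∈ Icc (j+1) k, θ a := by
    apply Finset.sum_pos
    · intro a ha; simp only [mem_Icc] at ha; exact (hθ a (by omega) (by omega)).1
    · exact ⟨k, by simp [mem_Icc]; omega⟩
  unfold Sv; linarith

lemma Sv_zero : Sv N θ 0 = 2 * Real.pi - θ N := by
  unfold Sv; rw [phi_pred N θ hN hθ hsum, phi_zero]; ring

lemma Sv_zero_mem : Real.pi < Sv N θ 0 ∧ Sv N θ 0 < 2 * Real.pi := by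
  rw [Sv_zero N θ hN hθ hsum]
  have h := hθ N (by omega) le_rfl
  constructor <;> [linarith [h.2]; linarith [h.1]]

lemma Sv_last : Sv N θ (N-2) = θ (N-1) := by
  rw [Sv_eq N θ hN hθ hsum (by omega)]
  have h2 : Icc (N-2+1) (N-1) = {N-1} := by
    have : N - 2 + 1 = N - 1 := by omega
    rw [this, Finset.Icc_self]
  rw [h2, Finset.sum_singleton]

lemma Sv_lt_two_pi {m : ℕ} (hm2 : m ≤ N-2) : Sv N θ m ≤ 2 * Real.pi - θ N := by
  rcases Nat.eq_zero_or_pos m with h0 | h0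
  · rw [h0, Sv_zero N θ hN hθ hsum]
  · have := Sv_anti N θ hN hθ hsum (j := 0) (k := m) h0 (by omega)
    rw [Sv_zero N θ hN hθ hsum] at this; linarith

lemma sin_theta_pos {k : ℕ} (h1 : 1 ≤ k) (h2 : k ≤ N) : 0 < Real.sin (θ k) :=
  Real.sin_pos_of_pos_of_lt_pi (hθ k h1 h2).1 (hθ k h1 h2).2


lemma phi_step {m : ℕ} (hm : 1 ≤ m) : phiAng θ m - phiAng θ (m-1) = θ m := by
  have h := phi_diff θ (j := m-1) (k := m) (by omega)
  have h2 : Icc (m-1+1) m = {m} := by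
    have : m - 1 + 1 = m := by omega
    rw [this, Finset.Icc_self]
  rw [h2, Finset.sum_singleton] at h
  exact h

lemma key_trig {m : ℕ} (hm : 1 ≤ m) (hm2 : m ≤ N-2) :
    sP θ m * sS N θ (m-1) - sP θ (m-1) * sS N θ m
      = -(Real.sin (θ N) * Real.sin (θ m)) := by
  have hphi : phiAng θ (m-1) = phiAng θ m - θ m := by
    have := phi_step N θ hN hθ hsum (m := m) hm; linarith
  have hK : phiAng θ (N-1) = 2 * Real.pi - θ N := phi_pred N θ hN hθ hsum
  unfold sP sS Sv
  rw [hphi, hK]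
  rw [show 2 * Real.pi - θ N - (phiAng θ m - θ m)
      = 2 * Real.pi - (θ N + phiAng θ m - θ m) by ring,
    show 2 * Real.pi - θ N - phiAng θ m = 2 * Real.pi - (θ N + phiAng θ m) by ring,
    _root_.sin_two_pi_sub, _root_.sin_two_pi_sub,
    show θ N + phiAng θ m - θ m = (θ N + phiAng θ m) - θ m by ring,
    Real.sin_sub, Real.sin_add, Real.cos_add, Real.sin_sub]
  linear_combination (-(Real.sin (θ N) * Real.sin (θ m))) * Real.sin_sq_add_cos_sq (phiAng θ m)

end WithHyp

noncomputable def uu (m : ℕ) : ℝ :=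
  if sS N θ m = 0 then sP θ (m-1) / sS N θ (m-1) else sP θ m / sS N θ m

noncomputable def cc (m : ℕ) : ℝ := uu N θ m - uu N θ (m-1)

noncomputable def mplus : ℕ :=
  @Nat.find (fun m => Sv N θ m ≤ Real.pi) (Classical.decPred _)
    ⟨N-1, by unfold Sv; simp [Real.pi_pos.le]⟩

section WithHyp2
variable (hN : 4 ≤ N) (hθ : ∀ k, 1 ≤ k → k ≤ N → θ k ∈ Set.Ioo 0 Real.pi)
  (hsum : ∑ k ∈ Finset.Icc 1 N, θ k = 2 * Real.pi)
include hN hθ hsum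

lemma mplus_le : mplus N θ ≤ N-2 := by
  apply Nat.find_le
  rw [Sv_last N θ hN hθ hsum]
  exact le_of_lt (hθ (N-1) (by omega) (by omega)).2

omit hN hθ hsum in
lemma mplus_spec : Sv N θ (mplus N θ) ≤ Real.pi :=
  Nat.find_spec (p := fun m => Sv N θ m ≤ Real.pi) _

omit hN hθ hsum in
lemma mplus_min {m : ℕ} (hm : m < mplus N θ) : Real.pi < Sv N θ m :=
  lt_of_not_ge (Nat.find_min (p := fun m => Sv N θ m ≤ Real.pi) _ hm)

lemma mplus_pos : 1 ≤ mplus N θ := by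
  rcases Nat.eq_zero_or_pos (mplus N θ) with h | h
  · exfalso
    have := mplus_spec N θ
    rw [h] at this
    have := (Sv_zero_mem N θ hN hθ hsum).1
    linarith
  · exact h

lemma sS_neg_of_lt {m : ℕ} (hm : m < mplus N θ) : sS N θ m < 0 := by
  have h1 : Real.pi < Sv N θ m := mplus_min N θ hm
  have h2 : Sv N θ m < 2 * Real.pi := by
    have := Sv_lt_two_pi N θ hN hθ hsum (m := m)
      (by have := mplus_le N θ hN hθ hsum; omega)
    have := (hθ N (by omega) le_rfl).1
    linarith
  exact sin_neg_of_pi_lt h1 h2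

lemma sS_pos_of_gt {m : ℕ} (hm : mplus N θ < m) (hm2 : m ≤ N-2) : 0 < sS N θ m := by
  have h1 : Sv N θ m < Sv N θ (mplus N θ) :=
    Sv_anti N θ hN hθ hsum hm (by omega)
  have h2 : 0 < Sv N θ m := Sv_pos N θ hN hθ hsum hm2
  exact Real.sin_pos_of_pos_of_lt_pi h2 (lt_of_lt_of_le h1 (mplus_spec N θ))

lemma sS_last_pos : 0 < sS N θ (N-2) := by
  unfold sS
  rw [Sv_last N θ hN hθ hsum]
  exact Real.sin_pos_of_pos_of_lt_pi (hθ (N-1) (by omega) (by omega)).1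
    (hθ (N-1) (by omega) (by omega)).2

lemma sS_zero_neg : sS N θ 0 < 0 := by
  have := Sv_zero_mem N θ hN hθ hsum
  exact sin_neg_of_pi_lt this.1 this.2

/-- In the degenerate case, `Sv mplus = π`. -/
lemma Sv_eq_pi_of_deg (hdeg : sS N θ (mplus N θ) = 0) : Sv N θ (mplus N θ) = Real.pi := by
  apply eq_pi_of_sin_eq_zero _ _ hdeg
  · exact Sv_pos N θ hN hθ hsum (mplus_le N θ hN hθ hsum)
  · have := Sv_lt_two_pi N θ hN hθ hsum (mplus_le N θ hN hθ hsum)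
    have := (hθ N (by omega) le_rfl).1
    linarith

lemma sS_pos_of_ge_nondeg (hdeg : sS N θ (mplus N θ) ≠ 0) {m : ℕ}
    (hm : mplus N θ ≤ m) (hm2 : m ≤ N-2) : 0 < sS N θ m := by
  rcases eq_or_lt_of_le hm with h | h
  · subst h
    have h1 : Sv N θ (mplus N θ) ≤ Real.pi := mplus_spec N θ
    have h2 : 0 < Sv N θ (mplus N θ) := Sv_pos N θ hN hθ hsum hm2
    have h3 : Sv N θ (mplus N θ) ≠ Real.pi := by
      intro hc
      exact hdeg (by unfold sS; rw [hc, Real.sin_pi])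
    exact Real.sin_pos_of_pos_of_lt_pi h2 (lt_of_le_of_ne h1 h3)
  · exact sS_pos_of_gt N θ hN hθ hsum h hm2

lemma deg_lt : sS N θ (mplus N θ) = 0 → mplus N θ ≤ N-3 := by
  intro hdeg
  have h1 := sS_last_pos N θ hN hθ hsum
  have h2 := mplus_le N θ hN hθ hsum
  rcases eq_or_lt_of_le h2 with h | h
  · rw [h] at hdeg; rw [hdeg] at h1; exact absurd h1 (lt_irrefl 0)
  · omega


lemma cc_formula {m : ℕ} (hm : 1 ≤ m) (hm2 : m ≤ N-2)
    (h1 : sS N θ m ≠ 0) (h0 : sS N θ (m-1) ≠ 0) :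
    cc N θ m = -(Real.sin (θ N) * Real.sin (θ m)) / (sS N θ m * sS N θ (m-1)) := by
  have key := key_trig N θ hN hθ hsum hm hm2
  unfold cc uu
  rw [if_neg h1, if_neg h0, div_sub_div _ _ h1 h0,
    show sP θ m * sS N θ (m-1) - sS N θ m * sP θ (m-1)
      = -(Real.sin (θ N) * Real.sin (θ m)) by linarith [key]]

lemma cc_pos_nondeg (hdeg : sS N θ (mplus N θ) ≠ 0) : 0 < cc N θ (mplus N θ) := by
  have hm : 1 ≤ mplus N θ := mplus_pos N θ hN hθ hsum
  have hm2 : mplus N θ ≤ N-2 := mplus_le N θ hN hθ hsum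
  have hS1 : 0 < sS N θ (mplus N θ) := sS_pos_of_ge_nondeg N θ hN hθ hsum hdeg le_rfl hm2
  have hS0 : sS N θ (mplus N θ - 1) < 0 := sS_neg_of_lt N θ hN hθ hsum (by omega)
  rw [cc_formula N θ hN hθ hsum hm hm2 (ne_of_gt hS1) (ne_of_lt hS0)]
  apply div_pos_of_neg_of_neg
  · have h1 := sin_theta_pos N θ hN hθ hsum (k := N) (by omega) le_rfl
    have h2 := sin_theta_pos N θ hN hθ hsum (k := mplus N θ) hm (by omega)
    nlinarith
  · exact mul_neg_of_pos_of_neg hS1 hS0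

lemma cc_neg_nondeg (hdeg : sS N θ (mplus N θ) ≠ 0) {m : ℕ} (hm : 1 ≤ m) (hm2 : m ≤ N-2)
    (hne : m ≠ mplus N θ) : cc N θ m < 0 := by
  have hsin : 0 < Real.sin (θ N) * Real.sin (θ m) := by
    have h1 := sin_theta_pos N θ hN hθ hsum (k := N) (by omega) le_rfl
    have h2 := sin_theta_pos N θ hN hθ hsum (k := m) hm (by omega)
    exact mul_pos h1 h2
  rcases lt_or_gt_of_ne hne with h | h
  · have hS1 : sS N θ m < 0 := sS_neg_of_lt N θ hN hθ hsum h
    have hS0 : sS N θ (m-1) < 0 := sS_neg_of_lt N θ hN hθ hsum (by omega)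
    rw [cc_formula N θ hN hθ hsum hm hm2 (ne_of_lt hS1) (ne_of_lt hS0)]
    apply div_neg_of_neg_of_pos (by linarith) (mul_pos_of_neg_of_neg hS1 hS0)
  · have hS1 : 0 < sS N θ m := sS_pos_of_ge_nondeg N θ hN hθ hsum hdeg (by omega) hm2
    have hS0 : 0 < sS N θ (m-1) := sS_pos_of_ge_nondeg N θ hN hθ hsum hdeg (by omega) (by omega)
    rw [cc_formula N θ hN hθ hsum hm hm2 (ne_of_gt hS1) (ne_of_gt hS0)]
    apply div_neg_of_neg_of_pos (by linarith) (mul_pos hS1 hS0)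

lemma cc_deg_zero (hdeg : sS N θ (mplus N θ) = 0) : cc N θ (mplus N θ) = 0 := by
  have hm : 1 ≤ mplus N θ := mplus_pos N θ hN hθ hsum
  have h0 : sS N θ (mplus N θ - 1) ≠ 0 :=
    ne_of_lt (sS_neg_of_lt N θ hN hθ hsum (by omega))
  unfold cc uu
  rw [if_pos hdeg, if_neg h0, sub_self]

lemma cc_neg_deg (hdeg : sS N θ (mplus N θ) = 0) {m : ℕ} (hm : 1 ≤ m) (hm2 : m ≤ N-2)
    (hne1 : m ≠ mplus N θ) (hne2 : m ≠ mplus N θ + 1) : cc N θ m < 0 := by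
  have hsin : 0 < Real.sin (θ N) * Real.sin (θ m) := by
    have h1 := sin_theta_pos N θ hN hθ hsum (k := N) (by omega) le_rfl
    have h2 := sin_theta_pos N θ hN hθ hsum (k := m) hm (by omega)
    exact mul_pos h1 h2
  rcases lt_or_gt_of_ne hne1 with h | h
  · have hS1 : sS N θ m < 0 := sS_neg_of_lt N θ hN hθ hsum h
    have hS0 : sS N θ (m-1) < 0 := sS_neg_of_lt N θ hN hθ hsum (by omega)
    rw [cc_formula N θ hN hθ hsum hm hm2 (ne_of_lt hS1) (ne_of_lt hS0)]
    apply div_neg_of_neg_of_pos (by linarith) (mul_pos_of_neg_of_neg hS1 hS0)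
  · have hS1 : 0 < sS N θ m := sS_pos_of_gt N θ hN hθ hsum h hm2
    have hS0 : 0 < sS N θ (m-1) := sS_pos_of_gt N θ hN hθ hsum (by omega) (by omega)
    rw [cc_formula N θ hN hθ hsum hm hm2 (ne_of_gt hS1) (ne_of_gt hS0)]
    apply div_neg_of_neg_of_pos (by linarith) (mul_pos hS1 hS0)

lemma sP_deg (hdeg : sS N θ (mplus N θ) = 0) : sP θ (mplus N θ) = Real.sin (θ N) := by
  have hpi := Sv_eq_pi_of_deg N θ hN hθ hsum hdeg
  have hK : phiAng θ (N-1) = 2 * Real.pi - θ N := phi_pred N θ hN hθ hsum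
  unfold Sv at hpi
  unfold sP
  rw [show phiAng θ (mplus N θ) = Real.pi - θ N by linarith, Real.sin_pi_sub]

lemma sS_nondeg_of_ne (hdeg : sS N θ (mplus N θ) = 0) {m : ℕ} (hm2 : m ≤ N-2)
    (hne : m ≠ mplus N θ) : sS N θ m ≠ 0 := by
  rcases lt_or_gt_of_ne hne with h | h
  · exact ne_of_lt (sS_neg_of_lt N θ hN hθ hsum h)
  · exact ne_of_gt (sS_pos_of_gt N θ hN hθ hsum h hm2)

lemma sS_nondeg_all (hdeg : sS N θ (mplus N θ) ≠ 0) {m : ℕ} (hm2 : m ≤ N-2) :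
    sS N θ m ≠ 0 := by
  rcases lt_trichotomy m (mplus N θ) with h | h | h
  · exact ne_of_lt (sS_neg_of_lt N θ hN hθ hsum h)
  · exact h ▸ hdeg
  · exact ne_of_gt (sS_pos_of_gt N θ hN hθ hsum h hm2)


end WithHyp2

noncomputable def rho (lam : ℕ → ℝ) (m : ℕ) : ℝ := ∑ j ∈ Icc m (N-2), sS N θ j * lam j

section WithHyp3
variable (hN : 4 ≤ N) (hθ : ∀ k, 1 ≤ k → k ≤ N → θ k ∈ Set.Ioo 0 Real.pi)
  (hsum : ∑ k ∈ Finset.Icc 1 N, θ k = 2 * Real.pi)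
include hN hθ hsum

lemma qform_sum_eq (lam : ℕ → ℝ) :
    2 * Real.sin (θ N) * Qform N θ lam
      = (∑ j ∈ Icc 1 (N-2), sP θ j * sS N θ j * (lam j)^2)
        + 2 * ∑ j ∈ Icc 1 (N-2), ∑ k ∈ Icc (j+1) (N-2),
            sP θ j * sS N θ k * (lam j * lam k) := by
  have hσ : Real.sin (θ N) ≠ 0 := ne_of_gt (sin_theta_pos N θ hN hθ hsum (by omega) le_rfl)
  unfold Qform
  rw [phi_N N θ hN hθ hsum]
  have e1 : ∀ j ∈ Icc 1 (N-2),
      Real.sin (2*Real.pi - phiAng θ j) * Real.sin (phiAng θ (N-1) - phiAng θ j)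
        / Real.sin (θ N) * (lam j)^2
      = -(sP θ j * sS N θ j * (lam j)^2) / Real.sin (θ N) := by
    intro j _; unfold sP sS Sv; rw [_root_.sin_two_pi_sub]; ring
  have e2 : ∀ j ∈ Icc 1 (N-2), ∀ k ∈ Icc (j+1) (N-2),
      Real.sin (2*Real.pi - phiAng θ j) * Real.sin (phiAng θ (N-1) - phiAng θ k)
        / Real.sin (θ N) * (lam j * lam k)
      = -(sP θ j * sS N θ k * (lam j * lam k)) / Real.sin (θ N) := by
    intro j _ k _; unfold sP sS Sv; rw [_root_.sin_two_pi_sub]; ring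
  rw [Finset.sum_congr rfl e1,
    Finset.sum_congr rfl (fun j hj => Finset.sum_congr rfl (fun k hk => e2 j hj k (by exact hk)))]
  rw [← Finset.sum_div]
  have e3 : ∀ j ∈ Icc 1 (N-2),
      ∑ k ∈ Icc (j+1) (N-2), -(sP θ j * sS N θ k * (lam j * lam k)) / Real.sin (θ N)
      = -(∑ k ∈ Icc (j+1) (N-2), sP θ j * sS N θ k * (lam j * lam k)) / Real.sin (θ N) := by
    intro j _
    rw [← Finset.sum_div, Finset.sum_neg_distrib]
  rw [Finset.sum_congr rfl e3, ← Finset.sum_div, Finset.sum_neg_distrib,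
    Finset.sum_neg_distrib]
  field_simp
  ring

lemma master_applied (lam : ℕ → ℝ) :
    2 * Real.sin (θ N) * Qform N θ lam
      = (∑ m ∈ Icc 1 (N-2), cc N θ m * (rho N θ lam m)^2)
        + ∑ m ∈ Icc 1 (N-2),
            (if sS N θ m = 0 then 2 * sP θ m * lam m * rho N θ lam (m+1) else 0) := by
  have h := master (N-2) (sP θ) (sS N θ) (uu N θ) lam
    (fun m h1 h2 hb => by unfold uu; rw [if_neg hb]; exact div_mul_cancel₀ _ hb) 1 le_rfl
  have hu0 : uu N θ 0 = 0 := by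
    unfold uu
    rw [if_neg (ne_of_lt (sS_zero_neg N θ hN hθ hsum))]
    unfold sP
    rw [phi_zero, Real.sin_zero, zero_div]
  rw [qform_sum_eq N θ hN hθ hsum lam]
  unfold cc rho
  simp only [hu0, zero_mul, sub_zero] at h
  rw [h]

lemma Q_nondeg (hdeg : sS N θ (mplus N θ) ≠ 0) (lam : ℕ → ℝ) :
    Qform N θ lam
      = (Real.sqrt (cc N θ (mplus N θ) / (2 * Real.sin (θ N))) * rho N θ lam (mplus N θ))^2
        - ∑ m ∈ (Icc 1 (N-2)).erase (mplus N θ),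
            (Real.sqrt (-cc N θ m / (2 * Real.sin (θ N))) * rho N θ lam m)^2 := by
  have hσ : 0 < Real.sin (θ N) := sin_theta_pos N θ hN hθ hsum (by omega) le_rfl
  have hmem : mplus N θ ∈ Icc 1 (N-2) :=
    Finset.mem_Icc.mpr ⟨mplus_pos N θ hN hθ hsum, mplus_le N θ hN hθ hsum⟩
  have hmain := master_applied N θ hN hθ hsum lam
  have hifs : (∑ m ∈ Icc 1 (N-2),
      (if sS N θ m = 0 then 2 * sP θ m * lam m * rho N θ lam (m+1) else 0)) = 0 := by
    apply Finset.sum_eq_zero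
    intro m hm
    exact if_neg (sS_nondeg_all N θ hN hθ hsum hdeg (Finset.mem_Icc.mp hm).2)
  rw [hifs, add_zero] at hmain
  have hQ : Qform N θ lam
      = (∑ m ∈ Icc 1 (N-2), cc N θ m * (rho N θ lam m)^2) / (2 * Real.sin (θ N)) :=
    (eq_div_iff (by linarith)).mpr (by linarith [hmain])
  have e4 : ∀ m ∈ (Icc 1 (N-2)).erase (mplus N θ),
      (Real.sqrt (-cc N θ m / (2 * Real.sin (θ N))) * rho N θ lam m)^2
        = -(cc N θ m * (rho N θ lam m)^2) / (2 * Real.sin (θ N)) := by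
    intro m hm
    obtain ⟨hne, hmem2⟩ := Finset.mem_erase.mp hm
    obtain ⟨h1, h2⟩ := Finset.mem_Icc.mp hmem2
    have hc : cc N θ m < 0 := cc_neg_nondeg N θ hN hθ hsum hdeg h1 h2 hne
    rw [mul_pow, Real.sq_sqrt (div_nonneg (by linarith) (by linarith))]
    ring
  have hpos : 0 ≤ cc N θ (mplus N θ) / (2 * Real.sin (θ N)) :=
    div_nonneg (le_of_lt (cc_pos_nondeg N θ hN hθ hsum hdeg)) (by linarith)
  rw [Finset.sum_congr rfl e4, ← Finset.sum_div, Finset.sum_neg_distrib,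
    mul_pow, Real.sq_sqrt hpos, hQ, ← Finset.add_sum_erase _ _ hmem]
  ring

lemma Q_deg (hdeg : sS N θ (mplus N θ) = 0) (lam : ℕ → ℝ) :
    Qform N θ lam
      = ((Real.sin (θ N) * lam (mplus N θ)
            + ((cc N θ (mplus N θ + 1) + 1)/2) * rho N θ lam (mplus N θ + 1))
          / Real.sqrt (2 * Real.sin (θ N)))^2
        - ((Real.sin (θ N) * lam (mplus N θ)
            + ((cc N θ (mplus N θ + 1) - 1)/2) * rho N θ lam (mplus N θ + 1))
          / Real.sqrt (2 * Real.sin (θ N)))^2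
        - ∑ m ∈ ((Icc 1 (N-2)).erase (mplus N θ)).erase (mplus N θ + 1),
            (Real.sqrt (-cc N θ m / (2 * Real.sin (θ N))) * rho N θ lam m)^2 := by
  have hσ : 0 < Real.sin (θ N) := sin_theta_pos N θ hN hθ hsum (by omega) le_rfl
  have hm3 : mplus N θ ≤ N-3 := deg_lt N θ hN hθ hsum hdeg
  have hm1 : 1 ≤ mplus N θ := mplus_pos N θ hN hθ hsum
  have hmem : mplus N θ ∈ Icc 1 (N-2) := Finset.mem_Icc.mpr ⟨hm1, by omega⟩
  have hmem2 : mplus N θ + 1 ∈ (Icc 1 (N-2)).erase (mplus N θ) :=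
    Finset.mem_erase.mpr ⟨by omega, Finset.mem_Icc.mpr ⟨by omega, by omega⟩⟩
  have hmain := master_applied N θ hN hθ hsum lam
  have hifs : (∑ m ∈ Icc 1 (N-2),
      (if sS N θ m = 0 then 2 * sP θ m * lam m * rho N θ lam (m+1) else 0))
      = 2 * Real.sin (θ N) * lam (mplus N θ) * rho N θ lam (mplus N θ + 1) := by
    rw [Finset.sum_eq_single_of_mem (mplus N θ) hmem
      (fun b hb hne => if_neg (sS_nondeg_of_ne N θ hN hθ hsum hdeg (Finset.mem_Icc.mp hb).2 hne)),
      if_pos hdeg, sP_deg N θ hN hθ hsum hdeg]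
  rw [hifs] at hmain
  have hQ : Qform N θ lam
      = ((∑ m ∈ Icc 1 (N-2), cc N θ m * (rho N θ lam m)^2)
          + 2 * Real.sin (θ N) * lam (mplus N θ) * rho N θ lam (mplus N θ + 1))
        / (2 * Real.sin (θ N)) :=
    (eq_div_iff (by linarith)).mpr (by linarith [hmain])
  have e4 : ∀ m ∈ ((Icc 1 (N-2)).erase (mplus N θ)).erase (mplus N θ + 1),
      (Real.sqrt (-cc N θ m / (2 * Real.sin (θ N))) * rho N θ lam m)^2
        = -(cc N θ m * (rho N θ lam m)^2) / (2 * Real.sin (θ N)) := by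
    intro m hm
    obtain ⟨hne2, hm'⟩ := Finset.mem_erase.mp hm
    obtain ⟨hne1, hmem3⟩ := Finset.mem_erase.mp hm'
    obtain ⟨h1, h2⟩ := Finset.mem_Icc.mp hmem3
    have hc : cc N θ m < 0 := cc_neg_deg N θ hN hθ hsum hdeg h1 h2 hne1 hne2
    rw [mul_pow, Real.sq_sqrt (div_nonneg (by linarith) (by linarith))]
    ring
  rw [Finset.sum_congr rfl e4, ← Finset.sum_div, Finset.sum_neg_distrib,
    div_pow, div_pow, Real.sq_sqrt (by linarith : (0:ℝ) ≤ 2 * Real.sin (θ N)), hQ,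
    ← Finset.add_sum_erase _ _ hmem, ← Finset.add_sum_erase _ _ hmem2,
    cc_deg_zero N θ hN hθ hsum hdeg]
  ring

end WithHyp3

noncomputable def coef (m j : ℕ) : ℝ :=
  if sS N θ (mplus N θ) = 0 then
    (if m = mplus N θ then
       (Real.sin (θ N) * (if j = mplus N θ then 1 else 0)
         + ((cc N θ (mplus N θ + 1) + 1)/2) * (if mplus N θ + 1 ≤ j then sS N θ j else 0))
         / Real.sqrt (2 * Real.sin (θ N))
     else if m = mplus N θ + 1 then
       (Real.sin (θ N) * (if j = mplus N θ then 1 else 0)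
         + ((cc N θ (mplus N θ + 1) - 1)/2) * (if mplus N θ + 1 ≤ j then sS N θ j else 0))
         / Real.sqrt (2 * Real.sin (θ N))
     else Real.sqrt (-cc N θ m / (2 * Real.sin (θ N))) * (if m ≤ j then sS N θ j else 0))
  else
    (if m = mplus N θ then
       Real.sqrt (cc N θ m / (2 * Real.sin (θ N))) * (if m ≤ j then sS N θ j else 0)
     else Real.sqrt (-cc N θ m / (2 * Real.sin (θ N))) * (if m ≤ j then sS N θ j else 0))

noncomputable def formL (m : ℕ) (lam : ℕ → ℝ) : ℝ :=
  ∑ j ∈ Icc 1 (N-2), coef N θ m j * lam j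

lemma base_sum {m : ℕ} (hm : 1 ≤ m) (lam : ℕ → ℝ) :
    ∑ j ∈ Icc 1 (N-2), (if m ≤ j then sS N θ j else 0) * lam j = rho N θ lam m := by
  unfold rho
  rw [← Finset.sum_subset (Finset.Icc_subset_Icc_left hm)
    (fun x hx hnx => by
      rw [if_neg, zero_mul]
      simp only [mem_Icc] at hx hnx
      omega)]
  exact Finset.sum_congr rfl (fun j hj => by
    rw [if_pos (Finset.mem_Icc.mp hj).1])

lemma delta_sum (lam : ℕ → ℝ) {m0 : ℕ} (h1 : 1 ≤ m0) (h2 : m0 ≤ N-2) :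
    ∑ j ∈ Icc 1 (N-2), (if j = m0 then (1:ℝ) else 0) * lam j = lam m0 := by
  rw [Finset.sum_eq_single_of_mem m0 (Finset.mem_Icc.mpr ⟨h1, h2⟩)
    (fun b hb hne => by rw [if_neg hne, zero_mul]), if_pos rfl, one_mul]

lemma scaled_base_sum (s : ℝ) {m : ℕ} (hm : 1 ≤ m) (lam : ℕ → ℝ) :
    ∑ j ∈ Icc 1 (N-2), (s * (if m ≤ j then sS N θ j else 0)) * lam j
      = s * rho N θ lam m := by
  rw [← base_sum N θ hm lam, Finset.mul_sum]
  exact Finset.sum_congr rfl (fun j _ => by ring)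

section WithHyp4
variable (hN : 4 ≤ N) (hθ : ∀ k, 1 ≤ k → k ≤ N → θ k ∈ Set.Ioo 0 Real.pi)
  (hsum : ∑ k ∈ Finset.Icc 1 N, θ k = 2 * Real.pi)
include hN hθ hsum

lemma formL_nondeg_pos (hdeg : sS N θ (mplus N θ) ≠ 0) (lam : ℕ → ℝ) :
    formL N θ (mplus N θ) lam
      = Real.sqrt (cc N θ (mplus N θ) / (2 * Real.sin (θ N))) * rho N θ lam (mplus N θ) := by
  unfold formL coef
  simp only [if_neg hdeg, if_pos rfl]
  exact scaled_base_sum N θ _ (mplus_pos N θ hN hθ hsum) lam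

lemma formL_nondeg_neg (hdeg : sS N θ (mplus N θ) ≠ 0) {m : ℕ} (hm : 1 ≤ m)
    (hne : m ≠ mplus N θ) (lam : ℕ → ℝ) :
    formL N θ m lam
      = Real.sqrt (-cc N θ m / (2 * Real.sin (θ N))) * rho N θ lam m := by
  unfold formL coef
  simp only [if_neg hdeg, if_neg hne]
  exact scaled_base_sum N θ _ hm lam

lemma formL_deg_block (hdeg : sS N θ (mplus N θ) = 0) (c : ℝ) (lam : ℕ → ℝ) :
    ∑ j ∈ Icc 1 (N-2),
      ((Real.sin (θ N) * (if j = mplus N θ then 1 else 0)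
         + c * (if mplus N θ + 1 ≤ j then sS N θ j else 0))
         / Real.sqrt (2 * Real.sin (θ N))) * lam j
      = (Real.sin (θ N) * lam (mplus N θ) + c * rho N θ lam (mplus N θ + 1))
          / Real.sqrt (2 * Real.sin (θ N)) := by
  have h1 : 1 ≤ mplus N θ := mplus_pos N θ hN hθ hsum
  have h2 : mplus N θ ≤ N-2 := mplus_le N θ hN hθ hsum
  have e : ∀ j ∈ Icc 1 (N-2),
      ((Real.sin (θ N) * (if j = mplus N θ then 1 else 0)
         + c * (if mplus N θ + 1 ≤ j then sS N θ j else 0))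
         / Real.sqrt (2 * Real.sin (θ N))) * lam j
      = (Real.sin (θ N) * ((if j = mplus N θ then (1:ℝ) else 0) * lam j)
          + c * ((if mplus N θ + 1 ≤ j then sS N θ j else 0) * lam j))
          / Real.sqrt (2 * Real.sin (θ N)) := by
    intro j _; ring
  rw [Finset.sum_congr rfl e, ← Finset.sum_div, Finset.sum_add_distrib,
    ← Finset.mul_sum, ← Finset.mul_sum, delta_sum N lam h1 h2,
    base_sum N θ (by omega) lam]

lemma formL_deg_p (hdeg : sS N θ (mplus N θ) = 0) (lam : ℕ → ℝ) :
    formL N θ (mplus N θ) lam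
      = (Real.sin (θ N) * lam (mplus N θ)
          + ((cc N θ (mplus N θ + 1) + 1)/2) * rho N θ lam (mplus N θ + 1))
          / Real.sqrt (2 * Real.sin (θ N)) := by
  unfold formL coef
  simp only [if_pos hdeg, if_pos rfl]
  exact formL_deg_block N θ hN hθ hsum hdeg _ lam

lemma formL_deg_r (hdeg : sS N θ (mplus N θ) = 0) (lam : ℕ → ℝ) :
    formL N θ (mplus N θ + 1) lam
      = (Real.sin (θ N) * lam (mplus N θ)
          + ((cc N θ (mplus N θ + 1) - 1)/2) * rho N θ lam (mplus N θ + 1))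
          / Real.sqrt (2 * Real.sin (θ N)) := by
  unfold formL coef
  have hne : mplus N θ + 1 ≠ mplus N θ := by omega
  simp only [if_pos hdeg, if_neg hne, if_pos rfl]
  exact formL_deg_block N θ hN hθ hsum hdeg _ lam

lemma formL_deg_other (hdeg : sS N θ (mplus N θ) = 0) {m : ℕ} (hm : 1 ≤ m)
    (hne1 : m ≠ mplus N θ) (hne2 : m ≠ mplus N θ + 1) (lam : ℕ → ℝ) :
    formL N θ m lam
      = Real.sqrt (-cc N θ m / (2 * Real.sin (θ N))) * rho N θ lam m := by
  unfold formL coef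
  simp only [if_pos hdeg, if_neg hne1, if_neg hne2]
  exact scaled_base_sum N θ _ hm lam

lemma rho_of_zero (lam : ℕ → ℝ) (hrho : ∀ m, 1 ≤ m → m ≤ N-2 → rho N θ lam m = 0)
    {j : ℕ} (h1 : 1 ≤ j) (h2 : j ≤ N-2) (hne : sS N θ j ≠ 0) : lam j = 0 := by
  have hstep : rho N θ lam j = sS N θ j * lam j + rho N θ lam (j+1) :=
    icc_split_bot h2 _
  have h3 : rho N θ lam (j+1) = 0 := by
    rcases le_or_gt (j+1) (N-2) with h | h
    · exact hrho (j+1) (by omega) h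
    · unfold rho; rw [Finset.Icc_eq_empty (by omega), Finset.sum_empty]
  have h4 := hrho j h1 h2
  rw [hstep, h3, add_zero] at h4
  rcases mul_eq_zero.mp h4 with h | h
  · exact absurd h hne
  · exact h

lemma formL_zero (lam : ℕ → ℝ) (h : ∀ m, 1 ≤ m → m ≤ N-2 → formL N θ m lam = 0) :
    ∀ j, 1 ≤ j → j ≤ N-2 → lam j = 0 := by
  have hσ : 0 < Real.sin (θ N) := sin_theta_pos N θ hN hθ hsum (by omega) le_rfl
  have hs : Real.sqrt (2 * Real.sin (θ N)) ≠ 0 :=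
    ne_of_gt (Real.sqrt_pos.mpr (by linarith))
  have hm1 : 1 ≤ mplus N θ := mplus_pos N θ hN hθ hsum
  have hm2 : mplus N θ ≤ N-2 := mplus_le N θ hN hθ hsum
  by_cases hdeg : sS N θ (mplus N θ) = 0
  · have hm3 : mplus N θ ≤ N-3 := deg_lt N θ hN hθ hsum hdeg
    have hp := h (mplus N θ) hm1 hm2
    have hr := h (mplus N θ + 1) (by omega) (by omega)
    rw [formL_deg_p N θ hN hθ hsum hdeg lam, div_eq_zero_iff] at hp
    rw [formL_deg_r N θ hN hθ hsum hdeg lam, div_eq_zero_iff] at hr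
    have hp' := hp.resolve_right hs
    have hr' := hr.resolve_right hs
    have hrho1 : rho N θ lam (mplus N θ + 1) = 0 := by linarith
    rw [hrho1] at hp'
    have hlam0 : lam (mplus N θ) = 0 := by
      have hz : Real.sin (θ N) * lam (mplus N θ) = 0 := by linarith
      rcases mul_eq_zero.mp hz with h' | h'
      · linarith
      · exact h'
    have hrho : ∀ m, 1 ≤ m → m ≤ N-2 → rho N θ lam m = 0 := by
      intro m hma hmb
      rcases eq_or_ne m (mplus N θ) with rfl | hne1
      · have hstep : rho N θ lam (mplus N θ)
            = sS N θ (mplus N θ) * lam (mplus N θ) + rho N θ lam (mplus N θ + 1) :=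
          icc_split_bot hmb _
        rw [hstep, hdeg, zero_mul, zero_add, hrho1]
      · rcases eq_or_ne m (mplus N θ + 1) with rfl | hne2
        · exact hrho1
        · have hf := h m hma hmb
          rw [formL_deg_other N θ hN hθ hsum hdeg hma hne1 hne2 lam] at hf
          rcases mul_eq_zero.mp hf with h' | h'
          · exfalso
            have hc : cc N θ m < 0 := cc_neg_deg N θ hN hθ hsum hdeg hma hmb hne1 hne2
            have : (0:ℝ) < -cc N θ m / (2 * Real.sin (θ N)) :=
              div_pos (by linarith) (by linarith)
            exact (ne_of_gt (Real.sqrt_pos.mpr this)) h'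
          · exact h'
    intro j h1 h2
    rcases eq_or_ne j (mplus N θ) with rfl | hne
    · exact hlam0
    · exact rho_of_zero N θ hN hθ hsum lam hrho h1 h2
        (sS_nondeg_of_ne N θ hN hθ hsum hdeg h2 hne)
  · have hrho : ∀ m, 1 ≤ m → m ≤ N-2 → rho N θ lam m = 0 := by
      intro m hma hmb
      have hf := h m hma hmb
      rcases eq_or_ne m (mplus N θ) with rfl | hne
      · rw [formL_nondeg_pos N θ hN hθ hsum hdeg lam] at hf
        rcases mul_eq_zero.mp hf with h' | h'
        · exfalso
          have hc : 0 < cc N θ (mplus N θ) := cc_pos_nondeg N θ hN hθ hsum hdeg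
          have hcd : (0:ℝ) < cc N θ (mplus N θ) / (2 * Real.sin (θ N)) :=
            div_pos hc (by linarith)
          exact (ne_of_gt (Real.sqrt_pos.mpr hcd)) h'
        · exact h'
      · rw [formL_nondeg_neg N θ hN hθ hsum hdeg hma hne lam] at hf
        rcases mul_eq_zero.mp hf with h' | h'
        · exfalso
          have hc : cc N θ m < 0 := cc_neg_nondeg N θ hN hθ hsum hdeg hma hmb hne
          have : (0:ℝ) < -cc N θ m / (2 * Real.sin (θ N)) :=
            div_pos (by linarith) (by linarith)
          exact (ne_of_gt (Real.sqrt_pos.mpr this)) h'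
        · exact h'
    intro j h1 h2
    exact rho_of_zero N θ hN hθ hsum lam hrho h1 h2
      (sS_nondeg_all N θ hN hθ hsum hdeg h2)

/-- The final quadratic identity in terms of `formL`. -/
lemma Q_formL (lam : ℕ → ℝ) :
    Qform N θ lam
      = (formL N θ (mplus N θ) lam)^2
        - ∑ m ∈ (Icc 1 (N-2)).erase (mplus N θ), (formL N θ m lam)^2 := by
  have hm1 : 1 ≤ mplus N θ := mplus_pos N θ hN hθ hsum
  by_cases hdeg : sS N θ (mplus N θ) = 0
  · have hm3 : mplus N θ ≤ N-3 := deg_lt N θ hN hθ hsum hdeg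
    have hmem2 : mplus N θ + 1 ∈ (Icc 1 (N-2)).erase (mplus N θ) :=
      Finset.mem_erase.mpr ⟨by omega, Finset.mem_Icc.mpr ⟨by omega, by omega⟩⟩
    rw [← Finset.add_sum_erase _ _ hmem2]
    rw [formL_deg_p N θ hN hθ hsum hdeg lam, formL_deg_r N θ hN hθ hsum hdeg lam]
    have e : ∀ m ∈ ((Icc 1 (N-2)).erase (mplus N θ)).erase (mplus N θ + 1),
        (formL N θ m lam)^2
          = (Real.sqrt (-cc N θ m / (2 * Real.sin (θ N))) * rho N θ lam m)^2 := by
      intro m hm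
      obtain ⟨hne2, hm'⟩ := Finset.mem_erase.mp hm
      obtain ⟨hne1, hmem3⟩ := Finset.mem_erase.mp hm'
      rw [formL_deg_other N θ hN hθ hsum hdeg (Finset.mem_Icc.mp hmem3).1 hne1 hne2 lam]
    rw [Finset.sum_congr rfl e]
    have := Q_deg N θ hN hθ hsum hdeg lam
    linarith [this]
  · rw [formL_nondeg_pos N θ hN hθ hsum hdeg lam]
    have e : ∀ m ∈ (Icc 1 (N-2)).erase (mplus N θ),
        (formL N θ m lam)^2
          = (Real.sqrt (-cc N θ m / (2 * Real.sin (θ N))) * rho N θ lam m)^2 := by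
      intro m hm
      obtain ⟨hne, hmem3⟩ := Finset.mem_erase.mp hm
      rw [formL_nondeg_neg N θ hN hθ hsum hdeg (Finset.mem_Icc.mp hmem3).1 hne lam]
    rw [Finset.sum_congr rfl e]
    exact Q_nondeg N θ hN hθ hsum hdeg lam

end WithHyp4

noncomputable def eIdx : (Fin 1 ⊕ Fin (N-3)) → ℕ :=
  Sum.elim (fun _ => mplus N θ)
    (fun j => if (j:ℕ)+1 < mplus N θ then (j:ℕ)+1 else (j:ℕ)+2)

section Final
variable (hN : 4 ≤ N) (hθ : ∀ k, 1 ≤ k → k ≤ N → θ k ∈ Set.Ioo 0 Real.pi)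
  (hsum : ∑ k ∈ Finset.Icc 1 N, θ k = 2 * Real.pi)
include hN hθ hsum

omit hθ hsum in
lemma bridge (m : ℕ) (x : Fin (N-2) → ℝ) :
    formL N θ m (fun k => if h : 1 ≤ k ∧ k ≤ N - 2 then x ⟨k - 1, by have := h.2; omega⟩ else 0)
      = ∑ j : Fin (N-2), coef N θ m (1+(j:ℕ)) * x j := by
  unfold formL
  rw [← Finset.Ico_add_one_right_eq_Icc, Finset.sum_Ico_eq_sum_range]
  simp only [Nat.add_sub_cancel]
  have h1 : ∑ j : Fin (N-2), coef N θ m (1+(j:ℕ)) * x j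
      = ∑ i ∈ Finset.range (N-2),
          coef N θ m (1+i) * (if h : i < N-2 then x ⟨i, h⟩ else 0) := by
    rw [← Fin.sum_univ_eq_sum_range
      (fun i => coef N θ m (1+i) * (if h : i < N-2 then x ⟨i, h⟩ else 0)) (N-2)]
    exact Finset.sum_congr rfl (fun j _ => by rw [dif_pos j.isLt])
  rw [h1]
  apply Finset.sum_congr rfl
  intro i hi
  have hi' : i < N-2 := Finset.mem_range.mp hi
  rw [dif_pos (show 1 ≤ 1+i ∧ 1+i ≤ N-2 by omega), dif_pos hi']
  congr 1
  exact congrArg x (Fin.ext (show 1+i-1 = i by omega))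

lemma eIdx_surj (m : ℕ) (h1 : 1 ≤ m) (h2 : m ≤ N-2) :
    ∃ i : Fin 1 ⊕ Fin (N-3), eIdx N θ i = m := by
  have hm1 : 1 ≤ mplus N θ := mplus_pos N θ hN hθ hsum
  have hm2 : mplus N θ ≤ N-2 := mplus_le N θ hN hθ hsum
  rcases lt_trichotomy m (mplus N θ) with h | h | h
  · refine ⟨Sum.inr ⟨m-1, by omega⟩, ?_⟩
    simp only [eIdx, Sum.elim_inr]
    rw [if_pos (by omega : m-1+1 < mplus N θ)]
    omega
  · exact ⟨Sum.inl 0, h.symm ▸ rfl⟩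
  · refine ⟨Sum.inr ⟨m-2, by omega⟩, ?_⟩
    simp only [eIdx, Sum.elim_inr]
    rw [if_neg (by omega : ¬(m-2+1 < mplus N θ))]
    omega

lemma eIdx_image :
    Finset.image (fun i : Fin (N-3) => eIdx N θ (Sum.inr i)) Finset.univ
      = (Icc 1 (N-2)).erase (mplus N θ) := by
  have hm1 : 1 ≤ mplus N θ := mplus_pos N θ hN hθ hsum
  have hm2 : mplus N θ ≤ N-2 := mplus_le N θ hN hθ hsum
  ext m
  simp only [Finset.mem_image, Finset.mem_univ, true_and, Finset.mem_erase, Finset.mem_Icc]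
  constructor
  · rintro ⟨i, rfl⟩
    simp only [eIdx, Sum.elim_inr]
    have hi := i.isLt
    split_ifs with h
    · exact ⟨by omega, by omega, by omega⟩
    · exact ⟨by omega, by omega, by omega⟩
  · rintro ⟨hne, hge, hle⟩
    rcases lt_or_gt_of_ne hne with h | h
    · refine ⟨⟨m-1, by omega⟩, ?_⟩
      simp only [eIdx, Sum.elim_inr]
      rw [if_pos (by omega : m-1+1 < mplus N θ)]
      omega
    · refine ⟨⟨m-2, by omega⟩, ?_⟩
      simp only [eIdx, Sum.elim_inr]
      rw [if_neg (by omega : ¬(m-2+1 < mplus N θ))]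
      omega

omit hN hθ hsum in
lemma eIdx_injOn (i j : Fin (N-3))
    (h : eIdx N θ (Sum.inr i) = eIdx N θ (Sum.inr j)) : i = j := by
  simp only [eIdx, Sum.elim_inr] at h
  apply Fin.ext
  split_ifs at h <;> omega

end Final
end Stmt3Aux

open Stmt3Aux Finset Module in
/-- Under the positivity condition (for `N ≥ 4`), the signed-area quadratic form has
signature `(1, N-3)`: in some basis of `ℝ^{N-2}` it is `x_1² - x_2² - ⋯ - x_{N-2}²`. -/
theorem stmt3 (N : ℕ) (hN : 4 ≤ N) (θ : ℕ → ℝ)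
    (hθ : ∀ k, 1 ≤ k → k ≤ N → θ k ∈ Set.Ioo 0 Real.pi)
    (hsum : ∑ k ∈ Finset.Icc 1 N, θ k = 2 * Real.pi) :
    ∃ b : Basis (Fin 1 ⊕ Fin (N-3)) ℝ (Fin (N-2) → ℝ),
      ∀ x : Fin (N-2) → ℝ,
        Qform N θ (fun k => if h : 1 ≤ k ∧ k ≤ N - 2 then x ⟨k - 1, by omega⟩ else 0)
          = (b.repr x (Sum.inl 0))^2 - ∑ i : Fin (N-3), (b.repr x (Sum.inr i))^2 := by
  classical
  set M : Matrix (Fin 1 ⊕ Fin (N-3)) (Fin (N-2)) ℝ :=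
    fun i j => coef N θ (eIdx N θ i) (1+(j:ℕ)) with hM
  have hφ : ∀ (x : Fin (N-2) → ℝ) (i : Fin 1 ⊕ Fin (N-3)), M.mulVecLin x i
      = formL N θ (eIdx N θ i)
          (fun k => if h : 1 ≤ k ∧ k ≤ N - 2 then x ⟨k - 1, by omega⟩ else 0) := by
    intro x i
    rw [bridge N θ hN (eIdx N θ i) x]
    rw [Matrix.mulVecLin_apply]
    simp [hM, Matrix.mulVecLin_apply, Matrix.mulVec, dotProduct]
  have hker : ∀ x : Fin (N-2) → ℝ, M.mulVecLin x = 0 → x = 0 := by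
    intro x hx
    have hall : ∀ m, 1 ≤ m → m ≤ N-2 →
        formL N θ m (fun k => if h : 1 ≤ k ∧ k ≤ N - 2 then x ⟨k - 1, by omega⟩ else 0) = 0 := by
      intro m h1 h2
      obtain ⟨i, hi⟩ := eIdx_surj N θ hN hθ hsum m h1 h2
      rw [← hi, ← hφ x i, hx]
      rfl
    have hz := formL_zero N θ hN hθ hsum _ hall
    funext j
    have hj := hz ((j:ℕ)+1) (by omega) (by omega)
    rw [dif_pos (show 1 ≤ (j:ℕ)+1 ∧ (j:ℕ)+1 ≤ N-2 by omega)] at hj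
    rw [show (⟨(j:ℕ)+1-1, by omega⟩ : Fin (N-2)) = j from Fin.ext (show (j:ℕ)+1-1 = (j:ℕ) by omega)] at hj
    exact hj
  have hinj : Function.Injective M.mulVecLin := by
    intro x y hxy
    have h0 : M.mulVecLin (x - y) = 0 := by rw [map_sub, hxy, sub_self]
    have := hker _ h0
    exact sub_eq_zero.mp this
  have hdim : finrank ℝ (Fin (N-2) → ℝ) = finrank ℝ ((Fin 1 ⊕ Fin (N-3)) → ℝ) := by
    rw [Module.finrank_pi, Module.finrank_pi, Fintype.card_fin, Fintype.card_sum,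
      Fintype.card_fin, Fintype.card_fin]
    omega
  refine ⟨Basis.ofEquivFun (M.mulVecLin.linearEquivOfInjective hinj hdim), ?_⟩
  intro x
  have hrepr : ∀ i, (Basis.ofEquivFun (M.mulVecLin.linearEquivOfInjective hinj hdim)).repr x i
      = M.mulVecLin x i := by
    intro i
    rw [Basis.ofEquivFun_repr_apply]
    rfl
  rw [Q_formL N θ hN hθ hsum]
  congr 1
  · rw [hrepr (Sum.inl 0), hφ x (Sum.inl 0)]
    rfl
  · rw [← eIdx_image N θ hN hθ hsum,
      Finset.sum_image (fun a _ b _ hab => eIdx_injOn N θ a b hab)]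
    exact Finset.sum_congr rfl (fun i _ => by rw [hrepr (Sum.inr i), hφ x (Sum.inr i)])
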